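/- For any finite digraph D, the maximum number τ(D) of pairwise arc-disjoint arborescences of D satisfies τ(D) ≤ λ(D), where λ(D) is the largest integer λ such that for all 0 ≤ ℓ ≤ λ, ∑_{i=0}^{ℓ-1} (ℓ - i)·|{v : d^in(v) = i}| ≤ ℓ. -/
import Mathlib


open Finset

variable {V : Type*} [Fintype V] [DecidableEq V]

/-- In-degree of a vertex in a digraph given by its arc set. -/
def inDegD (A : Finset (V × V)) (v : V) : ℕ := (A.filter fun e => e.2 = v).card

/-- Out-degree of a vertex. -/
def outDegD (A : Finset (V × V)) (v : V) : ℕ := (A.filter fun e => e.1 = v).card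

/-- Number of vertices of in-degree exactly `i`. -/
def Yk (A : Finset (V × V)) (i : ℕ) : ℕ := (univ.filter fun v => inDegD A v = i).card

/-- `λ(D)`: the largest `l` such that for all `k ≤ l`,
`∑_{i<k} (k-i)·Y_i ≤ k`. -/
noncomputable def lambdaD (A : Finset (V × V)) : ℕ :=
  sSup {l : ℕ | ∀ k ≤ l, ∑ i ∈ range k, (k - i) * Yk A i ≤ k}

/-- Minimum in-degree. -/
noncomputable def minInDegD (A : Finset (V × V)) : ℕ :=
  sInf {d : ℕ | ∃ v : V, inDegD A v = d}

/-- Minimum out-degree. -/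
noncomputable def minOutDegD (A : Finset (V × V)) : ℕ :=
  sInf {d : ℕ | ∃ v : V, outDegD A v = d}

/-- `B` is an arborescence of the digraph with arc set `A`: a spanning
sub-digraph with a root of in-degree 0, all other vertices of in-degree 1,
and every vertex reachable from the root (equivalently, the underlying
graph is a tree with all arcs pointing away from the root). -/
def IsArborescence (A B : Finset (V × V)) : Prop :=
  B ⊆ A ∧ ∃ r : V, inDegD B r = 0 ∧ (∀ v, v ≠ r → inDegD B v = 1) ∧
    ∀ v : V, Relation.ReflTransGen (fun x y => (x, y) ∈ B) r v

/-- `τ(D)`: the maximum number of pairwise arc-disjoint arborescences. -/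
noncomputable def tauD (A : Finset (V × V)) : ℕ :=
  sSup {k : ℕ | ∃ T : Fin k → Finset (V × V),
    (∀ i, IsArborescence A (T i)) ∧ ∀ i j, i ≠ j → Disjoint (T i) (T j)}

lemma sum_rewrite (A : Finset (V × V)) (l : ℕ) :
    ∑ i ∈ range l, (l - i) * Yk A i = ∑ v : V, (l - inDegD A v) := by
  classical
  have h := Finset.sum_fiberwise_of_maps_to
    (s := univ.filter fun v : V => inDegD A v < l) (t := range l)
    (g := inDegD A) (f := fun v => l - inDegD A v)
    (fun x hx => by simpa using (mem_filter.mp hx).2)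
  have h2 : ∑ v ∈ univ.filter (fun v : V => inDegD A v < l), (l - inDegD A v)
      = ∑ v : V, (l - inDegD A v) := by
    apply Finset.sum_subset (filter_subset _ _)
    intro x _ hx
    simp only [mem_filter, mem_univ, true_and, not_lt] at hx
    omega
  rw [← h2, ← h]
  apply Finset.sum_congr rfl
  intro i hi
  rw [mem_range] at hi
  have : (univ.filter fun v : V => inDegD A v < l).filter (fun v => inDegD A v = i)
      = univ.filter fun v => inDegD A v = i := by
    rw [filter_filter]
    apply filter_congr
    intro v _
    constructor
    · exact fun h => h.2
    · exact fun h => ⟨by omega, h⟩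
  rw [this, Yk, Finset.sum_congr rfl (fun v hv => by rw [(mem_filter.mp hv).2]),
    Finset.sum_const, smul_eq_mul, mul_comm]

lemma key_bound (A : Finset (V × V)) {k l : ℕ}
    (T : Fin k → Finset (V × V)) (hT : ∀ i, IsArborescence A (T i))
    (hd : ∀ i j, i ≠ j → Disjoint (T i) (T j)) (hl : l ≤ k) :
    ∑ v : V, (l - inDegD A v) ≤ l := by
  classical
  choose r hr0 hr1 _ using fun j => (hT j).2
  set R : Fin l → V := fun j => r (Fin.castLE hl j) with hR
  have hfib : ∑ v : V, (univ.filter fun j : Fin l => R j = v).card = l := by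
    rw [← Finset.card_eq_sum_card_fiberwise (fun x _ => mem_univ (R x))]
    simp
  have hv : ∀ v : V, l ≤ (univ.filter fun j : Fin l => R j = v).card + inDegD A v := by
    intro v
    have hsub : ((univ : Finset (Fin l)).biUnion fun j =>
        (T (Fin.castLE hl j)).filter fun e => e.2 = v) ⊆ A.filter fun e => e.2 = v := by
      intro e he
      simp only [Finset.mem_biUnion] at he
      obtain ⟨j, _, hj⟩ := he
      rw [Finset.mem_filter] at hj ⊢
      exact ⟨(hT _).1 hj.1, hj.2⟩
    have hdisj : ∀ x ∈ (univ : Finset (Fin l)), ∀ y ∈ (univ : Finset (Fin l)), x ≠ y →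
        Disjoint ((T (Fin.castLE hl x)).filter fun e => e.2 = v)
          ((T (Fin.castLE hl y)).filter fun e => e.2 = v) := by
      intro x _ y _ hxy
      refine Finset.disjoint_filter_filter (hd _ _ ?_)
      exact fun h => hxy (by exact_mod_cast Fin.castLE_injective hl h)
    have hcard : ∑ j : Fin l, inDegD (T (Fin.castLE hl j)) v ≤ inDegD A v := by
      calc ∑ j : Fin l, inDegD (T (Fin.castLE hl j)) v
          = ((univ : Finset (Fin l)).biUnion fun j =>
              (T (Fin.castLE hl j)).filter fun e => e.2 = v).card :=
            (Finset.card_biUnion hdisj).symm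
        _ ≤ inDegD A v := Finset.card_le_card hsub
    have hval : ∀ j : Fin l, inDegD (T (Fin.castLE hl j)) v = if R j = v then 0 else 1 := by
      intro j
      by_cases h : R j = v
      · rw [if_pos h, ← h]; exact hr0 _
      · rw [if_neg h]; exact hr1 _ v (fun hh => h hh.symm)
    have hsum : ∑ j : Fin l, inDegD (T (Fin.castLE hl j)) v
        = (univ.filter fun j : Fin l => ¬ R j = v).card := by
      rw [Finset.sum_congr rfl (fun j _ => hval j)]
      rw [Finset.sum_ite, Finset.sum_const, Finset.sum_const]
      simp
    have hpart := Finset.card_filter_add_card_filter_not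
      (s := (univ : Finset (Fin l))) (p := fun j => R j = v)
    simp only [Finset.card_univ, Fintype.card_fin] at hpart
    omega
  calc ∑ v : V, (l - inDegD A v)
      ≤ ∑ v : V, (univ.filter fun j : Fin l => R j = v).card :=
        Finset.sum_le_sum (fun v _ => by have := hv v; omega)
    _ = l := hfib

theorem stmt3 {V : Type*} [Fintype V] [DecidableEq V]
    (A : Finset (V × V)) (hloop : ∀ e ∈ A, e.1 ≠ e.2) :
    tauD A ≤ lambdaD A := by
  classical
  rw [tauD, lambdaD]
  set S : Set ℕ := {k : ℕ | ∃ T : Fin k → Finset (V × V),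
    (∀ i, IsArborescence A (T i)) ∧ ∀ i j, i ≠ j → Disjoint (T i) (T j)} with hS
  set L : Set ℕ := {l : ℕ | ∀ k ≤ l, ∑ i ∈ range k, (k - i) * Yk A i ≤ k} with hL
  have hsub : S ⊆ L := by
    intro k hk
    obtain ⟨T, hT, hd⟩ := hk
    intro m hm
    rw [sum_rewrite]
    exact key_bound A T hT hd hm
  have hS0 : (0 : ℕ) ∈ S := ⟨Fin.elim0, fun i => i.elim0, fun i => i.elim0⟩
  by_cases hb : BddAbove S
  · have htau : sSup S ∈ S := Nat.sSup_mem ⟨0, hS0⟩ hb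
    by_cases hbl : BddAbove L
    · exact le_csSup hbl (hsub htau)
    · -- L unbounded: show sSup S = 0
      rcases Nat.eq_zero_or_pos (sSup S) with h0 | hpos
      · rw [h0]; exact Nat.zero_le _
      · exfalso
        -- every natural is in L, since L is downward closed and unbounded
        have hall : ∀ n : ℕ, n ∈ L := by
          intro n
          obtain ⟨m, hm, hnm⟩ := not_bddAbove_iff.mp hbl n
          intro k hk
          exact hm k (le_trans hk hnm.le)
        have hcond : ∀ l : ℕ, ∑ v : V, (l - inDegD A v) ≤ l := by
          intro l
          rw [← sum_rewrite]
          exact hall l l le_rfl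
        -- extract a root: V is nonempty
        obtain ⟨T, hT, hd⟩ := htau
        obtain ⟨rt, -, -, -⟩ := (hT ⟨0, hpos⟩).2
        -- card V ≤ 1
        set s : ℕ := ∑ v : V, inDegD A v with hs
        have hdle : ∀ v : V, inDegD A v ≤ s :=
          fun v => Finset.single_le_sum (fun _ _ => Nat.zero_le _) (mem_univ v)
        have hcard : Fintype.card V ≤ 1 := by
          by_contra hc
          push_neg at hc
          have h1 : (s + 1) * Fintype.card V ≤ (s + 1) + s := by
            calc (s + 1) * Fintype.card V = ∑ _v : V, (s + 1) := by
                  rw [Finset.sum_const, smul_eq_mul, Finset.card_univ, mul_comm]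
              _ = ∑ v : V, (((s+1) - inDegD A v) + inDegD A v) :=
                  Finset.sum_congr rfl (fun v _ => by have := hdle v; omega)
              _ = (∑ v : V, ((s+1) - inDegD A v)) + s := by rw [Finset.sum_add_distrib]
              _ ≤ (s + 1) + s := by have := hcond (s+1); omega
          nlinarith
        have hsing : Subsingleton V := Fintype.card_le_one_iff_subsingleton.mp hcard
        -- then S is unbounded: constant empty families work
        have hSall : ∀ n : ℕ, n ∈ S := by
          intro n
          refine ⟨fun _ => (∅ : Finset (V × V)), fun i => ?_, fun i j _ => by simp⟩
          refine ⟨Finset.empty_subset _, rt, by simp [inDegD], ?_, ?_⟩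
          · intro v hv; exact absurd (Subsingleton.elim v rt) hv
          · intro v; rw [Subsingleton.elim v rt]
        obtain ⟨b, hbb⟩ := hb
        exact absurd (hbb (hSall (b+1))) (by omega)
  · rw [csSup_of_not_bddAbove hb, csSup_empty]
    exact Nat.zero_le _
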